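/- arXiv:2106.04894 — 5 statements merged into one kernel-verified Lean document; each statement's English description precedes it below -/
import Mathlib

section
/- Let G be a bipartite graph with parts A and B, each carrying nonnegative vertex weights summing to 1, and suppose every vertex of A has weight at most ρ. Define w(G) = Σ_{a∼b} w(a)w(b). If every set of t distinct vertices in A has common neighbourhood of total weight at most q, then w(G) ≤ q^{1/t} + t·ρ. -/
open Finset
open scoped Classical


noncomputable def Dsum {A : Type*} [Fintype A] (w : A → ℝ) (n : ℕ) (s : Finset A) : ℝ :=
  ∑ f ∈ (Finset.univ : Finset (Fin n → A)).filter
      (fun f => Function.Injective f ∧ ∀ i, f i ∈ s), ∏ i, w (f i)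

lemma Dsum_nonneg {A : Type*} [Fintype A] (w : A → ℝ) (hw : ∀ a, 0 ≤ w a) (n : ℕ)
    (s : Finset A) : 0 ≤ Dsum w n s :=
  Finset.sum_nonneg fun f _ => Finset.prod_nonneg fun i _ => hw _

lemma Dsum_succ {A : Type*} [Fintype A] (w : A → ℝ) (n : ℕ) (s : Finset A) :
    Dsum w (n+1) s = ∑ a ∈ s, w a * Dsum w n (s.erase a) := by
  rw [Dsum, Finset.sum_filter, ← Equiv.sum_comp (Fin.consEquiv (fun _ : Fin (n+1) => A)),
    Fintype.sum_prod_type]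
  rw [show (∑ a ∈ s, w a * Dsum w n (s.erase a))
      = ∑ a : A, if a ∈ s then w a * Dsum w n (s.erase a) else 0 by
    rw [Finset.sum_ite_mem, Finset.univ_inter]]
  apply Finset.sum_congr rfl
  intro x _
  by_cases hx : x ∈ s
  · simp only [hx, if_true]
    rw [Dsum, Finset.sum_filter, Finset.mul_sum]
    apply Finset.sum_congr rfl
    intro y _
    have he : (Fin.consEquiv (fun _ : Fin (n+1) => A)) (x, y) = Fin.cons x y := rfl
    rw [he]
    have hiff : (Function.Injective (Fin.cons x y : Fin (n+1) → A) ∧ ∀ i : Fin (n+1), (Fin.cons x y : Fin (n+1) → A) i ∈ s)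
        ↔ (Function.Injective y ∧ ∀ i, y i ∈ s.erase x) := by
      rw [Fin.cons_injective_iff, Fin.forall_fin_succ]
      simp only [Fin.cons_zero, Fin.cons_succ, Finset.mem_erase, Set.mem_range, not_exists]
      constructor
      · rintro ⟨⟨hr, hi⟩, _, hs⟩
        exact ⟨hi, fun i => ⟨hr i, hs i⟩⟩
      · rintro ⟨hi, hs⟩
        exact ⟨⟨fun i => (hs i).1, hi⟩, hx, fun i => (hs i).2⟩
    rw [if_congr hiff rfl rfl]
    have hp : ∏ i : Fin (n+1), w ((Fin.cons x y : Fin (n+1) → A) i) = w x * ∏ i : Fin n, w (y i) := by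
      rw [Fin.prod_univ_succ]
      simp [Fin.cons_zero, Fin.cons_succ]
    rw [hp, mul_ite, mul_zero]
  · simp only [hx, if_false]
    apply Finset.sum_eq_zero
    intro y _
    have : ¬ (Function.Injective ((Fin.consEquiv (fun _ : Fin (n+1) => A)) (x, y))
        ∧ ∀ i : Fin (n+1), ((Fin.consEquiv (fun _ : Fin (n+1) => A)) (x, y)) i ∈ s) := by
      rintro ⟨-, h⟩
      exact hx (by simpa using h 0)
    rw [if_neg this]

lemma Dsum_lower {A : Type*} [Fintype A] (w : A → ℝ) (ρ : ℝ) (hw0 : ∀ a, 0 ≤ w a)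
    (hρ : ∀ a, w a ≤ ρ) :
    ∀ (n : ℕ) (s : Finset A),
      ∏ k ∈ Finset.range n, max ((∑ a ∈ s, w a) - k * ρ) 0 ≤ Dsum w n s := by
  intro n
  induction n with
  | zero =>
    intro s
    simp only [Finset.range_zero, Finset.prod_empty, Dsum]
    have : ((Finset.univ : Finset (Fin 0 → A)).filter
        (fun f => Function.Injective f ∧ ∀ i, f i ∈ s)) = Finset.univ := by
      apply Finset.filter_true_of_mem
      intro f _
      exact ⟨fun i => absurd i.2 (by omega), fun i => absurd i.2 (by omega)⟩
    rw [this]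
    simp
  | succ n ih =>
    intro s
    have hS0 : 0 ≤ ∑ a ∈ s, w a := Finset.sum_nonneg fun a _ => hw0 a
    rw [Dsum_succ, Finset.prod_range_succ']
    have h0 : max ((∑ a ∈ s, w a) - (0:ℕ) * ρ) 0 = ∑ a ∈ s, w a := by
      simp [max_eq_left hS0]
    rw [h0, Finset.mul_sum]
    apply Finset.sum_le_sum
    intro a ha
    rw [mul_comm]
    apply mul_le_mul_of_nonneg_left _ (hw0 a)
    calc ∏ k ∈ Finset.range n, max ((∑ a ∈ s, w a) - (↑(k+1)) * ρ) 0
        ≤ ∏ k ∈ Finset.range n, max ((∑ b ∈ s.erase a, w b) - k * ρ) 0 := by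
          apply Finset.prod_le_prod
          · intro k _; exact le_max_right _ _
          · intro k _
            apply max_le_max _ le_rfl
            rw [Finset.sum_erase_eq_sub ha]
            push_cast
            have := hρ a
            nlinarith [hw0 a]
      _ ≤ Dsum w n (s.erase a) := ih _

theorem stmt5 {A B : Type*} [Fintype A] [Fintype B] (Adj : A → B → Prop)
    (wA : A → ℝ) (wB : B → ℝ)
    (hwA0 : ∀ a, 0 ≤ wA a) (hwA1 : ∑ a, wA a = 1)
    (hwB0 : ∀ b, 0 ≤ wB b) (hwB1 : ∑ b, wB b = 1)
    (t : ℕ) (ht : 1 ≤ t) (q ρ : ℝ) (hq : 0 ≤ q)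
    (hρ : ∀ a, wA a ≤ ρ)
    (hcn : ∀ T : Finset A, T.card = t →
      ∑ b ∈ Finset.univ.filter (fun b => ∀ a ∈ T, Adj a b), wB b ≤ q) :
    ∑ a : A, ∑ b ∈ Finset.univ.filter (fun b => Adj a b), wA a * wB b ≤
      q ^ ((1 : ℝ) / t) + t * ρ := by
  classical
  have hA : Nonempty A := by
    by_contra h
    rw [not_nonempty_iff] at h
    rw [Finset.univ_eq_empty, Finset.sum_empty] at hwA1
    norm_num at hwA1
  obtain ⟨a₀⟩ := hA
  have hρ0 : 0 ≤ ρ := le_trans (hwA0 a₀) (hρ a₀)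
  set N : B → Finset A := fun b => Finset.univ.filter (fun a => Adj a b) with hN
  set d : B → ℝ := fun b => ∑ a ∈ N b, wA a with hd
  have hd0 : ∀ b, 0 ≤ d b := fun b => Finset.sum_nonneg fun a _ => hwA0 a
  set x : ℝ := ∑ b, wB b * d b with hx
  -- LHS equals x
  have hLHS : (∑ a : A, ∑ b ∈ Finset.univ.filter (fun b => Adj a b), wA a * wB b) = x := by
    rw [hx]
    simp only [Finset.sum_filter, hd, hN, Finset.mul_sum]
    rw [Finset.sum_comm]
    apply Finset.sum_congr rfl
    intro b _
    apply Finset.sum_congr rfl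
    intro a _
    by_cases h : Adj a b <;> simp [h, mul_comm]
  rw [hLHS]
  have hq1t : 0 ≤ q ^ ((1:ℝ)/t) := Real.rpow_nonneg hq _
  rcases le_or_gt x ((t:ℝ) * ρ) with hcase | hcase
  · linarith
  -- hard case
  set y : B → ℝ := fun b => max (d b - t * ρ) 0 with hy
  have hy0 : ∀ b, 0 ≤ y b := fun b => le_max_right _ _
  have hxt0 : (0:ℝ) ≤ x - t * ρ := le_of_lt (by linarith)
  have step1 : (x - t*ρ)^t ≤ ∑ b, wB b * (y b)^t := by
    have h1 : x - t*ρ ≤ ∑ b, wB b * y b := by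
      have : ∑ b, wB b * (d b - t*ρ) = x - t*ρ := by
        simp only [mul_sub, Finset.sum_sub_distrib, ← Finset.sum_mul, hwB1, hx]
        ring
      rw [← this]
      apply Finset.sum_le_sum
      intro b _
      exact mul_le_mul_of_nonneg_left (le_max_left _ _) (hwB0 b)
    calc (x - t*ρ)^t ≤ (∑ b, wB b * y b)^t := by
          apply pow_le_pow_left₀ hxt0 h1
      _ ≤ ∑ b, wB b * (y b)^t := by
          have hconv := (convexOn_pow (𝕜 := ℝ) t)
          have := hconv.map_sum_le (t := Finset.univ) (w := wB) (p := y)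
            (fun b _ => hwB0 b) hwB1 (fun b _ => hy0 b)
          simpa [smul_eq_mul] using this
  have step2 : ∀ b, (y b)^t ≤ Dsum wA t (N b) := by
    intro b
    calc (y b)^t = ∏ k ∈ Finset.range t, y b := by
          rw [Finset.prod_const, Finset.card_range]
      _ ≤ ∏ k ∈ Finset.range t, max (d b - k * ρ) 0 := by
          apply Finset.prod_le_prod (fun k _ => hy0 b)
          intro k hk
          apply max_le_max _ le_rfl
          have hk' : (k:ℝ) ≤ t := by
            rw [Finset.mem_range] at hk
            exact_mod_cast hk.le
          nlinarith
      _ ≤ Dsum wA t (N b) := Dsum_lower wA ρ hwA0 hρ t (N b)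
  have step3 : ∑ b, wB b * Dsum wA t (N b) ≤ q := by
    have hswap : ∑ b, wB b * Dsum wA t (N b)
        = ∑ f ∈ (Finset.univ : Finset (Fin t → A)).filter Function.Injective,
            (∏ i, wA (f i)) * ∑ b ∈ Finset.univ.filter (fun b => ∀ i, Adj (f i) b), wB b := by
      simp only [Dsum, Finset.sum_filter, Finset.mul_sum]
      rw [Finset.sum_comm]
      apply Finset.sum_congr rfl
      intro f _
      by_cases hf : Function.Injective f
      · simp only [hf, true_and, if_true, hN, Finset.mem_filter, Finset.mem_univ, true_and]
        apply Finset.sum_congr rfl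
        intro b _
        by_cases hAdj : ∀ i, Adj (f i) b <;> simp [hAdj, mul_comm]
      · simp [hf]
    rw [hswap]
    have hb1 : ∀ f : Fin t → A, Function.Injective f →
        ∑ b ∈ Finset.univ.filter (fun b => ∀ i, Adj (f i) b), wB b ≤ q := by
      intro f hf
      have hcard : (Finset.image f Finset.univ).card = t := by
        rw [Finset.card_image_of_injective _ hf, Finset.card_univ, Fintype.card_fin]
      have := hcn (Finset.image f Finset.univ) hcard
      convert this using 2
      ext b
      simp
    calc ∑ f ∈ (Finset.univ : Finset (Fin t → A)).filter Function.Injective,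
            (∏ i, wA (f i)) * ∑ b ∈ Finset.univ.filter (fun b => ∀ i, Adj (f i) b), wB b
        ≤ ∑ f ∈ (Finset.univ : Finset (Fin t → A)).filter Function.Injective,
            (∏ i, wA (f i)) * q := by
          apply Finset.sum_le_sum
          intro f hf
          rw [Finset.mem_filter] at hf
          exact mul_le_mul_of_nonneg_left (hb1 f hf.2)
            (Finset.prod_nonneg fun i _ => hwA0 _)
      _ ≤ ∑ f : Fin t → A, (∏ i, wA (f i)) * q := by
          apply Finset.sum_le_sum_of_subset_of_nonneg (Finset.filter_subset _ _)
          intro f _ _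
          exact mul_nonneg (Finset.prod_nonneg fun i _ => hwA0 _) hq
      _ = q := by
          rw [← Finset.sum_mul, ← Fintype.sum_pow, hwA1, one_pow, one_mul]
  have key : (x - t*ρ)^t ≤ q := by
    calc (x - t*ρ)^t ≤ ∑ b, wB b * (y b)^t := step1
      _ ≤ ∑ b, wB b * Dsum wA t (N b) :=
          Finset.sum_le_sum fun b _ => mul_le_mul_of_nonneg_left (step2 b) (hwB0 b)
      _ ≤ q := step3
  have hfinal : x - t*ρ ≤ q ^ ((1:ℝ)/t) := by
    have ht0 : (t:ℝ) ≠ 0 := by positivity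
    have h1 : ((x - t*ρ)^t : ℝ) ^ ((1:ℝ)/t) ≤ q ^ ((1:ℝ)/t) :=
      Real.rpow_le_rpow (pow_nonneg hxt0 t) key (by positivity)
    rwa [← Real.rpow_natCast (x - t*ρ) t, ← Real.rpow_mul hxt0,
      mul_one_div, div_self ht0, Real.rpow_one] at h1
  linarith
end

section
/- There is no finite set of points Z = A_1 + A_2 + ... + A_{d+1} ⊆ R^d, with each |A_i| = 2, that is in convex position. -/
open Finset

/-- The Minkowski sum `A 0 + A 1 + ⋯ + A (k-1)` of a family of finite sets. -/
def minkSum {d k : ℕ} (A : Fin k → Finset (EuclideanSpace ℝ (Fin d))) :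
    Set (EuclideanSpace ℝ (Fin d)) :=
  {x | ∃ f : Fin k → EuclideanSpace ℝ (Fin d), (∀ i, f i ∈ A i) ∧ x = ∑ i, f i}

theorem stmt8 (d : ℕ) (A : Fin (d + 1) → Finset (EuclideanSpace ℝ (Fin d)))
    (hA : ∀ i, (A i).card = 2) :
    ¬ (∀ z ∈ minkSum A, z ∉ convexHull ℝ (minkSum A \ {z})) := by
  intro hconv
  classical
  choose a b hne hAab using fun i => Finset.card_eq_two.mp (hA i)
  set v : Fin (d+1) → EuclideanSpace ℝ (Fin d) := fun i => b i - a i with hv_def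
  have hv : ∀ i, v i ≠ 0 := fun i => sub_ne_zero.mpr (Ne.symm (hne i))
  have hdep : ¬ LinearIndependent ℝ v := by
    intro h
    have h1 := h.fintype_card_le_finrank
    rw [finrank_euclideanSpace_fin] at h1
    simp at h1
  obtain ⟨g, hgsum, i0, hgi0⟩ := Fintype.not_linearIndependent_iff.mp hdep
  set pt : Finset (Fin (d+1)) → EuclideanSpace ℝ (Fin d) :=
    fun S => ∑ i, if i ∈ S then b i else a i with hpt_def
  have hptmem : ∀ S, pt S ∈ minkSum A := by
    intro S
    refine ⟨fun i => if i ∈ S then b i else a i, fun i => ?_, rfl⟩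
    rw [hAab i]; by_cases h : i ∈ S <;> simp [h]
  have hptform : ∀ S, pt S = (∑ i, a i) + ∑ i ∈ S, v i := by
    intro S
    have h : ∀ i, (if i ∈ S then b i else a i) = a i + (if i ∈ S then v i else 0) := by
      intro i; by_cases h : i ∈ S <;> simp [h, hv_def]
    simp_rw [hpt_def, h, Finset.sum_add_distrib]
    congr 1
    rw [Finset.sum_ite_mem, Finset.univ_inter]
  set N : Finset (Fin (d+1)) := Finset.univ.filter (fun j => g j < 0) with hN
  set q : EuclideanSpace ℝ (Fin d) := pt N with hq
  set t : Finset (Fin (d+1)) := Finset.univ.filter (fun j => g j ≠ 0) with ht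
  set u : Fin (d+1) → EuclideanSpace ℝ (Fin d) :=
    fun i => if 0 < g i then v i else -v i with hu
  set z : Fin (d+1) → EuclideanSpace ℝ (Fin d) :=
    fun i => if 0 < g i then pt (insert i N) else pt (N.erase i) with hz
  have hzq : ∀ i ∈ t, z i = q + u i := by
    intro i hi
    simp only [ht, Finset.mem_filter, Finset.mem_univ, true_and] at hi
    by_cases h : 0 < g i
    · have hiN : i ∉ N := by simp [hN, not_lt.mpr h.le]
      simp only [hz, hu, if_pos h, hq]
      rw [hptform, hptform, Finset.sum_insert hiN]
      abel
    · have hg : g i < 0 := lt_of_le_of_ne (not_lt.mp h) hi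
      have hiN : i ∈ N := by simp [hN, hg]
      simp only [hz, hu, if_neg h, hq]
      rw [hptform, hptform, ← Finset.sum_erase_add N v hiN]
      abel
  have hkey : ∑ i ∈ t, |g i| • u i = 0 := by
    have h : ∀ i ∈ t, |g i| • u i = g i • v i := by
      intro i hi
      simp only [ht, Finset.mem_filter, Finset.mem_univ, true_and] at hi
      by_cases h : 0 < g i
      · simp only [hu, if_pos h, abs_of_pos h]
      · have hg : g i < 0 := lt_of_le_of_ne (not_lt.mp h) hi
        simp only [hu, if_neg h, abs_of_neg hg, smul_neg, neg_smul, neg_neg]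
    rw [Finset.sum_congr rfl h, ← hgsum]
    apply Finset.sum_subset (Finset.subset_univ t)
    intro i _ hit
    simp only [ht, Finset.mem_filter, Finset.mem_univ, true_and, not_not] at hit
    simp [hit]
  have hwpos : 0 < ∑ i ∈ t, |g i| := by
    apply Finset.sum_pos' (fun i _ => abs_nonneg _)
    exact ⟨i0, by simp [ht, hgi0], abs_pos.mpr hgi0⟩
  have hzs : ∀ i ∈ t, z i ∈ minkSum A \ {q} := by
    intro i hi
    have hu0 : u i ≠ 0 := by
      by_cases h : 0 < g i <;> simp [hu, h, hv i]
    constructor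
    · have hzi : z i = if 0 < g i then pt (insert i N) else pt (N.erase i) := rfl
      rw [hzi]; split <;> exact hptmem _
    · rw [hzq i hi]
      simp only [Set.mem_singleton_iff]
      intro hc
      exact hu0 (by rwa [add_eq_left] at hc)
  have hcm : t.centerMass (fun i => |g i|) z ∈ convexHull ℝ (minkSum A \ {q}) :=
    Finset.centerMass_mem_convexHull t (fun i _ => abs_nonneg _) hwpos hzs
  have hcmq : t.centerMass (fun i => |g i|) z = q := by
    have hs : ∑ i ∈ t, |g i| • z i = ∑ i ∈ t, (|g i| • q + |g i| • u i) :=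
      Finset.sum_congr rfl fun i hi => by rw [hzq i hi, smul_add]
    rw [Finset.centerMass, hs, Finset.sum_add_distrib, hkey, add_zero, ← Finset.sum_smul,
      inv_smul_smul₀ (ne_of_gt hwpos)]
  exact hconv q (hptmem N) (hcmq ▸ hcm)
end

section
/- Let S ⊆ R^d have the property that the intersection of any t distinct translates of S contains at most M points. Suppose there is a partition {1,...,n} = I_1 ⊔ I_2 such that X_1 = Σ_{i∈I_1} a_iξ_i has maximum point probability at most λ_1 and X_2 = Σ_{i∈I_2} a_iξ_i has maximum point probability at most λ_2, where ξ_i are i.i.d. Rademacher. Then Pr(X_1 + X_2 ∈ S) ≤ (M·λ_2)^{1/t} + t·λ_1. -/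
open Finset
open scoped Classical

/-- Probability of an event over uniformly random sign vectors in `{-1,1}^n`
(encoded as `Fin n → Bool`). -/
noncomputable def rprob {n : ℕ} (P : (Fin n → Bool) → Prop) : ℝ :=
  ((Finset.univ : Finset (Fin n → Bool)).filter P).card / 2 ^ n

/-- The Rademacher sum `∑_{i ∈ I} ξ_i a_i` for a sign vector `ε`. -/
noncomputable def radSumOn {n d : ℕ} (a : Fin n → EuclideanSpace ℝ (Fin d))
    (I : Finset (Fin n)) (ε : Fin n → Bool) : EuclideanSpace ℝ (Fin d) :=
  ∑ i ∈ I, (if ε i then (1 : ℝ) else -1) • a i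

/-- The full Rademacher sum `a_1 ξ_1 + ⋯ + a_n ξ_n`. -/
noncomputable def radSum {n d : ℕ} (a : Fin n → EuclideanSpace ℝ (Fin d))
    (ε : Fin n → Bool) : EuclideanSpace ℝ (Fin d) :=
  radSumOn a Finset.univ ε

/-- `ρ((a_i)_{i ∈ I}) = max_{x ∈ ℝ^d} Pr(∑_{i ∈ I} a_i ξ_i = x)`. -/
noncomputable def rhoOn {n d : ℕ} (a : Fin n → EuclideanSpace ℝ (Fin d))
    (I : Finset (Fin n)) : ℝ :=
  sSup {p : ℝ | ∃ x, p = rprob (fun ε => radSumOn a I ε = x)}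

/-! ### Auxiliary lemmas -/

/-- Ordered selection sum over (implicitly) distinct tuples. -/
noncomputable def selT {α : Type*} [DecidableEq α] (W : α → ℝ) : ℕ → Finset α → ℝ
  | 0, _ => 1
  | (r+1), A => ∑ x ∈ A, W x * selT W r (A.erase x)

lemma selT_nonneg {α : Type*} [DecidableEq α] {W : α → ℝ} (hW : ∀ x, 0 ≤ W x) :
    ∀ (r : ℕ) (A : Finset α), 0 ≤ selT W r A
  | 0, A => by simp [selT]
  | (r+1), A => by
      simp only [selT]
      exact Finset.sum_nonneg fun x _ => mul_nonneg (hW x) (selT_nonneg hW r _)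

lemma selT_lower {α : Type*} [DecidableEq α] {W : α → ℝ} {lam : ℝ}
    (hW : ∀ x, 0 ≤ W x) (hWl : ∀ x, W x ≤ lam) :
    ∀ (r : ℕ) (A : Finset α),
      ∏ i ∈ Finset.range r, max (∑ x ∈ A, W x - i * lam) 0 ≤ selT W r A := by
  intro r
  induction r with
  | zero => intro A; simp [selT]
  | succ r ih =>
    intro A
    have hF : (0:ℝ) ≤ ∑ x ∈ A, W x := Finset.sum_nonneg fun x _ => hW x
    rw [Finset.prod_range_succ']
    have hmax : max (∑ x ∈ A, W x - (0:ℕ) * lam) 0 = ∑ x ∈ A, W x := by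
      simp [max_eq_left hF]
    rw [hmax]
    simp only [selT]
    calc (∏ k ∈ Finset.range r, max (∑ x ∈ A, W x - ((k:ℕ)+1 : ℕ) * lam) 0) * (∑ x ∈ A, W x)
        = ∑ x ∈ A, W x * ∏ k ∈ Finset.range r, max (∑ x ∈ A, W x - ((k:ℕ)+1 : ℕ) * lam) 0 := by
          rw [Finset.mul_sum]; exact Finset.sum_congr rfl fun x _ => by ring
      _ ≤ ∑ x ∈ A, W x * selT W r (A.erase x) := by
          apply Finset.sum_le_sum
          intro x hx
          apply mul_le_mul_of_nonneg_left _ (hW x)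
          refine le_trans ?_ (ih (A.erase x))
          apply Finset.prod_le_prod
          · intro i _; positivity
          · intro i _
            have hsum : ∑ z ∈ A, W z - W x ≤ ∑ z ∈ A.erase x, W z := by
              rw [Finset.sum_erase_eq_sub hx]
            have : ∑ z ∈ A, W z - ((i:ℕ)+1 : ℕ) * lam ≤ ∑ z ∈ A.erase x, W z - (i:ℝ) * lam := by
              push_cast
              have := hWl x
              linarith
            exact max_le_max this (le_refl 0)

lemma rprob_nonneg {n : ℕ} (P : (Fin n → Bool) → Prop) : 0 ≤ rprob P := by
  unfold rprob; positivity

lemma rprob_sum_fiber {n : ℕ} {E : Type*} (g : (Fin n → Bool) → E) :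
    ∑ x ∈ Finset.univ.image g, rprob (fun ε => g ε = x) = 1 := by
  unfold rprob
  rw [← Finset.sum_div]
  rw [show (∑ x ∈ Finset.univ.image g,
      ((Finset.univ.filter fun ε => g ε = x).card : ℝ)) =
      ((∑ x ∈ Finset.univ.image g,
      (Finset.univ.filter fun ε => g ε = x).card : ℕ) : ℝ) by push_cast; ring]
  rw [← Finset.card_eq_sum_card_fiberwise (fun ε _ => Finset.mem_image_of_mem g (Finset.mem_univ ε))]
  simp [Finset.card_univ]

/-- fiber cardinality for the merge map -/
lemma merge_fiber_card {n : ℕ} (I : Finset (Fin n)) (ω : Fin n → Bool) :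
    ((Finset.univ : Finset ((Fin n → Bool) × (Fin n → Bool))).filter
      (fun p => (fun i => if i ∈ I then p.1 i else p.2 i) = ω)).card = 2 ^ n := by
  have : ((Finset.univ : Finset ((Fin n → Bool) × (Fin n → Bool))).filter
      (fun p => (fun i => if i ∈ I then p.1 i else p.2 i) = ω)) =
      (Fintype.piFinset fun i => if i ∈ I then {ω i} else Finset.univ) ×ˢ
      (Fintype.piFinset fun i => if i ∈ I then Finset.univ else {ω i}) := by
    ext p
    simp only [Finset.mem_filter, Finset.mem_univ, true_and, Finset.mem_product,
      Fintype.mem_piFinset, funext_iff]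
    constructor
    · intro h
      constructor
      · intro i
        by_cases hi : i ∈ I
        · have := h i; rw [if_pos hi] at this; simp [hi, this]
        · simp [hi]
      · intro i
        by_cases hi : i ∈ I
        · simp [hi]
        · have := h i; rw [if_neg hi] at this; simp [hi, this]
    · rintro ⟨h1, h2⟩ i
      by_cases hi : i ∈ I
      · have := h1 i; rw [if_pos hi] at this ⊢; simpa using this
      · have := h2 i; rw [if_neg hi] at this ⊢; simpa using this
  rw [this, Finset.card_product, Fintype.card_piFinset, Fintype.card_piFinset]
  rw [← Finset.prod_mul_distrib]
  have : ∀ i : Fin n, ((if i ∈ I then ({ω i} : Finset Bool) else Finset.univ).card *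
      (if i ∈ I then (Finset.univ : Finset Bool) else {ω i}).card) = 2 := by
    intro i; by_cases hi : i ∈ I <;> simp [hi]
  rw [Finset.prod_congr rfl fun i _ => this i]
  simp [Finset.card_univ]

/-- Independence of events depending on disjoint coordinate sets. -/
lemma rprob_indep {n : ℕ} (I : Finset (Fin n)) (P Q : (Fin n → Bool) → Prop)
    (hP : ∀ ε δ, (∀ i ∈ I, ε i = δ i) → (P ε ↔ P δ))
    (hQ : ∀ ε δ, (∀ i ∉ I, ε i = δ i) → (Q ε ↔ Q δ)) :
    rprob (fun ε => P ε ∧ Q ε) = rprob P * rprob Q := by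
  classical
  set ψ : (Fin n → Bool) × (Fin n → Bool) → (Fin n → Bool) :=
    fun p i => if i ∈ I then p.1 i else p.2 i with hψ
  have key : (Finset.univ.filter P).card * (Finset.univ.filter Q).card =
      (Finset.univ.filter fun ε => P ε ∧ Q ε).card * 2 ^ n := by
    have h1 : (Finset.univ.filter P).card * (Finset.univ.filter Q).card =
        ((Finset.univ : Finset ((Fin n → Bool) × (Fin n → Bool))).filter
          (fun p => P p.1 ∧ Q p.2)).card := by
      rw [← Finset.card_product, ← Finset.filter_product, Finset.univ_product_univ]
    rw [h1]
    rw [Finset.card_eq_sum_card_fiberwise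
      (f := ψ) (t := Finset.univ) (fun p _ => Finset.mem_univ _)]
    have h2 : ∀ ω : Fin n → Bool,
        (((Finset.univ : Finset ((Fin n → Bool) × (Fin n → Bool))).filter
          (fun p => P p.1 ∧ Q p.2)).filter (fun p => ψ p = ω)).card =
        if P ω ∧ Q ω then 2 ^ n else 0 := by
      intro ω
      rw [Finset.filter_filter]
      by_cases hω : P ω ∧ Q ω
      · rw [if_pos hω, ← merge_fiber_card I ω]
        congr 1
        apply Finset.filter_congr
        intro p _
        constructor
        · exact fun h => h.2
        · intro h
          refine ⟨⟨?_, ?_⟩, h⟩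
          · rw [hP p.1 ω (fun i hi => by
              have := congrFun h i; beta_reduce at this; rw [← this]; simp [hi])]
            exact hω.1
          · rw [hQ p.2 ω (fun i hi => by
              have := congrFun h i; beta_reduce at this; rw [← this]; simp [hi])]
            exact hω.2
      · rw [if_neg hω]
        rw [Finset.card_eq_zero, Finset.filter_eq_empty_iff]
        intro p _
        rintro ⟨⟨hp1, hp2⟩, h⟩
        apply hω
        constructor
        · rw [← hP p.1 ω (fun i hi => by
            have := congrFun h i; simp only [hψ] at this; rw [← this]; simp [hi])]
          exact hp1
        · rw [← hQ p.2 ω (fun i hi => by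
            have := congrFun h i; simp only [hψ] at this; rw [← this]; simp [hi])]
          exact hp2
    rw [Finset.sum_congr rfl fun ω _ => h2 ω]
    rw [Finset.sum_ite, Finset.sum_const, Finset.sum_const_zero, add_zero,
      smul_eq_mul]
  have keyR : ((Finset.univ.filter P).card : ℝ) * ((Finset.univ.filter Q).card : ℝ) =
      ((Finset.univ.filter fun ε => P ε ∧ Q ε).card : ℝ) * 2 ^ n := by
    exact_mod_cast key
  unfold rprob
  have h2n : ((2:ℝ) ^ n) ≠ 0 := by positivity
  rw [div_mul_div_comm, keyR, mul_div_mul_right _ _ h2n]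
  congr 3
  apply Finset.filter_congr_decidable

/-- Weighted Kővári–Sós–Turán type bound. -/
lemma Phi_bound {E : Type*} [AddCommMonoid E] [DecidableEq E]
    (S : Set E) (t M : ℕ) (V₁ V₂ : Finset E) (μ ν : E → ℝ) (lam₂ : ℝ)
    (hμ0 : ∀ x, 0 ≤ μ x) (hl2 : 0 ≤ (M:ℝ) * lam₂)
    (hμ1 : ∑ x ∈ V₁, μ x ≤ 1)
    (hB : ∀ B : Finset E, B.card = t →
      ∑ y ∈ V₂.filter (fun y => ∀ b ∈ B, b + y ∈ S), ν y ≤ (M:ℝ) * lam₂) :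
    ∀ (r : ℕ) (B : Finset E), B.card + r = t →
      ∑ y ∈ V₂.filter (fun y => ∀ b ∈ B, b + y ∈ S),
        ν y * selT μ r ((V₁.filter fun x => x + y ∈ S) \ B) ≤ (M:ℝ) * lam₂ := by
  intro r
  induction r with
  | zero =>
    intro B hcard
    simp only [selT, mul_one]
    exact hB B (by simpa using hcard)
  | succ r ih =>
    intro B hcard
    have herase : ∀ (y : E) (x : E),
        ((V₁.filter fun z => z + y ∈ S) \ B).erase x
          = (V₁.filter fun z => z + y ∈ S) \ insert x B := by
      intro y x; ext z
      simp only [Finset.mem_erase, Finset.mem_sdiff, Finset.mem_insert, Finset.mem_filter]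
      tauto
    have hidx : ∀ y : E, (V₁.filter fun z => z + y ∈ S) \ B
        = (V₁ \ B).filter (fun z => z + y ∈ S) := by
      intro y; ext z
      simp only [Finset.mem_sdiff, Finset.mem_filter]
      tauto
    calc ∑ y ∈ V₂.filter (fun y => ∀ b ∈ B, b + y ∈ S),
          ν y * selT μ (r+1) ((V₁.filter fun x => x + y ∈ S) \ B)
        = ∑ y ∈ V₂.filter (fun y => ∀ b ∈ B, b + y ∈ S), ∑ x ∈ V₁ \ B,
            (if x + y ∈ S then
              ν y * (μ x * selT μ r ((V₁.filter fun z => z + y ∈ S) \ insert x B)) else 0) := by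
          apply Finset.sum_congr rfl
          intro y _
          simp only [selT]
          rw [Finset.mul_sum]
          rw [show (∑ x ∈ (V₁.filter fun z => z + y ∈ S) \ B,
            ν y * (μ x * selT μ r (((V₁.filter fun z => z + y ∈ S) \ B).erase x)))
            = ∑ x ∈ (V₁ \ B).filter (fun z => z + y ∈ S),
            ν y * (μ x * selT μ r ((V₁.filter fun z => z + y ∈ S) \ insert x B)) by
              rw [← hidx y]
              exact Finset.sum_congr rfl fun x _ => by rw [herase y x]]
          rw [Finset.sum_filter]
      _ = ∑ x ∈ V₁ \ B, ∑ y ∈ V₂.filter (fun y => ∀ b ∈ B, b + y ∈ S),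
            (if x + y ∈ S then
              ν y * (μ x * selT μ r ((V₁.filter fun z => z + y ∈ S) \ insert x B)) else 0) :=
          Finset.sum_comm
      _ = ∑ x ∈ V₁ \ B, μ x * ∑ y ∈ V₂.filter (fun y => ∀ b ∈ insert x B, b + y ∈ S),
            ν y * selT μ r ((V₁.filter fun z => z + y ∈ S) \ insert x B) := by
          apply Finset.sum_congr rfl
          intro x _
          rw [← Finset.sum_filter, Finset.filter_filter, Finset.mul_sum]
          rw [show (V₂.filter fun y => (∀ b ∈ B, b + y ∈ S) ∧ x + y ∈ S)
              = V₂.filter (fun y => ∀ b ∈ insert x B, b + y ∈ S) by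
            apply Finset.filter_congr; intro y _
            simp only [Finset.forall_mem_insert]; tauto]
          exact Finset.sum_congr rfl fun y _ => by ring
      _ ≤ ∑ x ∈ V₁ \ B, μ x * ((M:ℝ) * lam₂) := by
          apply Finset.sum_le_sum
          intro x hx
          have hxB : x ∉ B := (Finset.mem_sdiff.mp hx).2
          have : (insert x B).card + r = t := by
            rw [Finset.card_insert_of_notMem hxB]; omega
          exact mul_le_mul_of_nonneg_left (ih (insert x B) this) (hμ0 x)
      _ ≤ (M:ℝ) * lam₂ := by
          rw [← Finset.sum_mul]
          have : ∑ x ∈ V₁ \ B, μ x ≤ 1 :=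
            le_trans (Finset.sum_le_sum_of_subset_of_nonneg (Finset.sdiff_subset)
              (fun x _ _ => hμ0 x)) hμ1
          nlinarith [this, hl2]

lemma rprob_congr {n : ℕ} {P Q : (Fin n → Bool) → Prop} (h : ∀ ε, P ε ↔ Q ε) :
    rprob P = rprob Q := by
  unfold rprob
  congr 2
  congr 1
  ext ε
  simp only [Finset.mem_filter, Finset.mem_univ, true_and]
  exact h ε

lemma rprob_eq_zero {n : ℕ} {P : (Fin n → Bool) → Prop} (h : ∀ ε, ¬ P ε) :
    rprob P = 0 := by
  unfold rprob
  rw [Finset.filter_eq_empty_iff.mpr (fun ε _ => h ε)]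
  simp

lemma rprob_partition {n : ℕ} {E' : Type*} (g : (Fin n → Bool) → E') (V : Finset E')
    (hg : ∀ ε, g ε ∈ V) (P : (Fin n → Bool) → Prop) :
    rprob P = ∑ z ∈ V, rprob (fun ε => P ε ∧ g ε = z) := by
  have hnat : (Finset.univ.filter P).card
      = ∑ z ∈ V, ((Finset.univ.filter fun ε => P ε ∧ g ε = z)).card := by
    rw [Finset.card_eq_sum_card_fiberwise (f := g) (t := V)
      (fun ε _ => hg ε) (s := Finset.univ.filter P)]
    apply Finset.sum_congr rfl
    intro z _
    congr 1
    ext ε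
    simp only [Finset.mem_filter, Finset.mem_univ, true_and]
  unfold rprob
  rw [← Finset.sum_div]
  congr 1
  rw [hnat]
  push_cast
  apply Finset.sum_congr rfl
  intro z _
  congr 2
  ext ε
  simp only [Finset.mem_filter]

set_option maxHeartbeats 1000000 in
theorem stmt11 {d n : ℕ} (S : Set (EuclideanSpace ℝ (Fin d))) (t M : ℕ) (ht : 1 ≤ t)
    (hS : ∀ x : Fin t → EuclideanSpace ℝ (Fin d), Function.Injective x →
      Set.encard {y : EuclideanSpace ℝ (Fin d) | ∀ i, y + x i ∈ S} ≤ (M : ℕ∞))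
    (a : Fin n → EuclideanSpace ℝ (Fin d)) (I : Finset (Fin n)) (lam₁ lam₂ : ℝ)
    (h1 : ∀ x, rprob (fun ε => radSumOn a I ε = x) ≤ lam₁)
    (h2 : ∀ x, rprob (fun ε => radSumOn a Iᶜ ε = x) ≤ lam₂) :
    rprob (fun ε => radSum a ε ∈ S) ≤ ((M : ℝ) * lam₂) ^ ((1 : ℝ) / t) + t * lam₁ := by
  classical
  set μ : EuclideanSpace ℝ (Fin d) → ℝ := fun x => rprob (fun ε => radSumOn a I ε = x) with hμdef
  set ν : EuclideanSpace ℝ (Fin d) → ℝ := fun y => rprob (fun ε => radSumOn a Iᶜ ε = y) with hνdef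
  set V₁ : Finset (EuclideanSpace ℝ (Fin d)) := Finset.univ.image (radSumOn a I) with hV₁
  set V₂ : Finset (EuclideanSpace ℝ (Fin d)) := Finset.univ.image (radSumOn a Iᶜ) with hV₂
  have hμ0 : ∀ x, 0 ≤ μ x := fun x => rprob_nonneg _
  have hν0 : ∀ y, 0 ≤ ν y := fun y => rprob_nonneg _
  have hμl : ∀ x, μ x ≤ lam₁ := by simp only [hμdef]; exact h1
  have hνl : ∀ y, ν y ≤ lam₂ := by simp only [hνdef]; exact h2
  have hμ1 : ∑ x ∈ V₁, μ x = 1 := by convert rprob_sum_fiber (radSumOn a I)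
  have hν1 : ∑ y ∈ V₂, ν y = 1 := by convert rprob_sum_fiber (radSumOn a Iᶜ)
  have hl1 : 0 ≤ lam₁ := le_trans (rprob_nonneg _) (h1 0)
  have hl2 : 0 ≤ lam₂ := le_trans (rprob_nonneg _) (h2 0)
  have hq0 : 0 ≤ (M:ℝ) * lam₂ := by positivity
  have hdep : ∀ (J : Finset (Fin n)) (ε δ : Fin n → Bool), (∀ i ∈ J, ε i = δ i) →
      radSumOn a J ε = radSumOn a J δ := by
    intro J ε δ h
    exact Finset.sum_congr rfl fun i hi => by rw [h i hi]
  have hsplit : ∀ ε, radSum a ε = radSumOn a I ε + radSumOn a Iᶜ ε := by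
    intro ε
    exact (Finset.sum_add_sum_compl I _).symm
  have hind : ∀ x y, rprob (fun ε => radSumOn a I ε = x ∧ radSumOn a Iᶜ ε = y)
      = μ x * ν y := by
    intro x y
    simp only [hμdef, hνdef]
    exact rprob_indep I _ _ (fun ε δ h => by rw [hdep I ε δ h])
      (fun ε δ h => by rw [hdep Iᶜ ε δ (fun i hi => h i (Finset.mem_compl.mp hi))])
  have hdecomp : rprob (fun ε => radSum a ε ∈ S) =
      ∑ y ∈ V₂, ν y * ∑ x ∈ V₁.filter (fun x => x + y ∈ S), μ x := by
    calc rprob (fun ε => radSum a ε ∈ S)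
        = ∑ z ∈ V₁ ×ˢ V₂, rprob (fun ε => radSum a ε ∈ S ∧
            (radSumOn a I ε, radSumOn a Iᶜ ε) = z) := by
          apply rprob_partition (fun ε => (radSumOn a I ε, radSumOn a Iᶜ ε)) (V₁ ×ˢ V₂)
            (fun ε => Finset.mem_product.mpr
              ⟨Finset.mem_image_of_mem _ (Finset.mem_univ ε),
               Finset.mem_image_of_mem _ (Finset.mem_univ ε)⟩)
      _ = ∑ z ∈ V₁ ×ˢ V₂, (if z.1 + z.2 ∈ S then μ z.1 * ν z.2 else 0) := by
          apply Finset.sum_congr rfl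
          rintro ⟨x, y⟩ _
          by_cases hxy : x + y ∈ S
          · rw [if_pos hxy, ← hind x y]
            apply rprob_congr
            intro ε
            simp only [Prod.mk.injEq]
            constructor
            · rintro ⟨-, hx, hy⟩; exact ⟨hx, hy⟩
            · rintro ⟨hx, hy⟩
              exact ⟨by rw [hsplit ε, hx, hy]; exact hxy, hx, hy⟩
          · rw [if_neg hxy]
            apply rprob_eq_zero
            rintro ε ⟨hs, hpair⟩
            simp only [Prod.mk.injEq] at hpair
            exact hxy (by rw [← hpair.1, ← hpair.2, ← hsplit ε]; exact hs)
      _ = ∑ x ∈ V₁, ∑ y ∈ V₂, (if x + y ∈ S then μ x * ν y else 0) := by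
          rw [Finset.sum_product]
      _ = ∑ y ∈ V₂, ∑ x ∈ V₁, (if x + y ∈ S then μ x * ν y else 0) := Finset.sum_comm
      _ = ∑ y ∈ V₂, ν y * ∑ x ∈ V₁.filter (fun x => x + y ∈ S), μ x := by
          apply Finset.sum_congr rfl
          intro y _
          rw [← Finset.sum_filter, ← Finset.sum_mul, mul_comm]
  set f : EuclideanSpace ℝ (Fin d) → ℝ := fun y => ∑ x ∈ V₁.filter (fun x => x + y ∈ S), μ x with hf
  set p : ℝ := rprob (fun ε => radSum a ε ∈ S) with hp
  set c : ℝ := ((t:ℝ) - 1) * lam₁ with hc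
  set m : ℝ := max (p - c) 0 with hm
  have hm0 : 0 ≤ m := le_max_right _ _
  -- the hypothesis for Phi_bound
  have hB : ∀ B : Finset (EuclideanSpace ℝ (Fin d)), B.card = t →
      ∑ y ∈ V₂.filter (fun y => ∀ b ∈ B, b + y ∈ S), ν y ≤ (M:ℝ) * lam₂ := by
    intro B hBc
    set e : Fin t → EuclideanSpace ℝ (Fin d) :=
      fun i => ((B.equivFin.symm (Fin.cast hBc.symm i)) : EuclideanSpace ℝ (Fin d)) with he
    have hinj : Function.Injective e := by
      intro i j hij
      have h2' : B.equivFin.symm (Fin.cast hBc.symm i) = B.equivFin.symm (Fin.cast hBc.symm j) :=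
        Subtype.ext hij
      have h3' := B.equivFin.symm.injective h2'
      have h4' : (Fin.cast hBc.symm i).val = (Fin.cast hBc.symm j).val := congrArg Fin.val h3'
      exact Fin.val_injective h4' 
    have hsub : ((V₂.filter (fun y => ∀ b ∈ B, b + y ∈ S)) : Set (EuclideanSpace ℝ (Fin d))) ⊆
        {y : EuclideanSpace ℝ (Fin d) | ∀ i, y + e i ∈ S} := by
      intro y hy
      simp only [Finset.coe_filter, Set.mem_setOf_eq] at hy
      intro i
      rw [add_comm]
      exact hy.2 _ (B.equivFin.symm (Fin.cast hBc.symm i)).2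
    have hcard : ((V₂.filter (fun y => ∀ b ∈ B, b + y ∈ S)).card : ℕ∞) ≤ (M : ℕ∞) := by
      rw [← Set.encard_coe_eq_coe_finsetCard]
      exact le_trans (Set.encard_mono hsub) (hS e hinj)
    have hcard' : (V₂.filter (fun y => ∀ b ∈ B, b + y ∈ S)).card ≤ M := by
      exact_mod_cast hcard
    calc ∑ y ∈ V₂.filter (fun y => ∀ b ∈ B, b + y ∈ S), ν y
        ≤ (V₂.filter (fun y => ∀ b ∈ B, b + y ∈ S)).card • lam₂ := by
          apply Finset.sum_le_card_nsmul
          intro y _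
          exact hνl y
      _ = ((V₂.filter (fun y => ∀ b ∈ B, b + y ∈ S)).card : ℝ) * lam₂ := by
          rw [nsmul_eq_mul]
      _ ≤ (M:ℝ) * lam₂ := by
          apply mul_le_mul_of_nonneg_right _ hl2
          exact_mod_cast hcard'
  -- the KST upper bound
  have hupper : ∑ y ∈ V₂, ν y * selT μ t (V₁.filter fun x => x + y ∈ S) ≤ (M:ℝ) * lam₂ := by
    have := Phi_bound S t M V₁ V₂ μ ν lam₂ hμ0 hq0 (le_of_eq hμ1) hB t ∅ (by simp)
    simpa using this
  -- the lower bound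
  have hpery : ∀ y : EuclideanSpace ℝ (Fin d), (max (f y - c) 0) ^ t ≤ selT μ t (V₁.filter fun x => x + y ∈ S) := by
    intro y
    refine le_trans ?_ (selT_lower hμ0 hμl t (V₁.filter fun x => x + y ∈ S))
    rw [show ((max (f y - c) 0) ^ t : ℝ) = ∏ _i ∈ Finset.range t, max (f y - c) 0 by
      rw [Finset.prod_const, Finset.card_range]]
    apply Finset.prod_le_prod
    · intro i _; exact le_max_right _ _
    · intro i hi
      apply max_le_max _ (le_refl (0:ℝ))
      have : (i : ℝ) ≤ (t:ℝ) - 1 := by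
        have : (i:ℕ) < t := Finset.mem_range.mp hi
        have : (i:ℝ) + 1 ≤ (t:ℝ) := by exact_mod_cast this
        linarith
      have : (i:ℝ) * lam₁ ≤ ((t:ℝ) - 1) * lam₁ := mul_le_mul_of_nonneg_right this hl1
      simp only [hf, hc]
      linarith
  -- Jensen
  have hjensen : (∑ y ∈ V₂, ν y * max (f y - c) 0) ^ t ≤
      ∑ y ∈ V₂, ν y * (max (f y - c) 0) ^ t :=
    Real.pow_arith_mean_le_arith_mean_pow V₂ ν (fun y => max (f y - c) 0)
      (fun y _ => hν0 y) hν1 (fun y _ => le_max_right _ _) t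
  have hmean : m ≤ ∑ y ∈ V₂, ν y * max (f y - c) 0 := by
    apply max_le
    · have : ∑ y ∈ V₂, ν y * (f y - c) ≤ ∑ y ∈ V₂, ν y * max (f y - c) 0 :=
        Finset.sum_le_sum fun y _ => mul_le_mul_of_nonneg_left (le_max_left _ _) (hν0 y)
      have heq : ∑ y ∈ V₂, ν y * (f y - c) = p - c := by
        rw [show (∑ y ∈ V₂, ν y * (f y - c)) = (∑ y ∈ V₂, ν y * f y) - c * ∑ y ∈ V₂, ν y by
          rw [Finset.mul_sum]; rw [← Finset.sum_sub_distrib]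
          exact Finset.sum_congr rfl fun y _ => by ring]
        rw [hν1, hdecomp]
        ring
      linarith
    · exact Finset.sum_nonneg fun y _ => mul_nonneg (hν0 y) (le_max_right _ _)
  have hmt : m ^ t ≤ (M:ℝ) * lam₂ := by
    calc m ^ t ≤ (∑ y ∈ V₂, ν y * max (f y - c) 0) ^ t := pow_le_pow_left₀ hm0 hmean t
      _ ≤ ∑ y ∈ V₂, ν y * (max (f y - c) 0) ^ t := hjensen
      _ ≤ ∑ y ∈ V₂, ν y * selT μ t (V₁.filter fun x => x + y ∈ S) :=
          Finset.sum_le_sum fun y _ => mul_le_mul_of_nonneg_left (hpery y) (hν0 y)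
      _ ≤ (M:ℝ) * lam₂ := hupper
  -- conclude via rpow
  have ht0 : (t:ℝ) ≠ 0 := Nat.cast_ne_zero.mpr (by omega)
  have hroot : (m ^ t) ^ ((1:ℝ)/t) = m := by
    rw [← Real.rpow_natCast m t, ← Real.rpow_mul hm0, mul_one_div_cancel ht0, Real.rpow_one]
  have hmle : m ≤ ((M:ℝ) * lam₂) ^ ((1:ℝ)/t) := by
    rw [← hroot]
    apply Real.rpow_le_rpow (by positivity) hmt (by positivity)
  have hpc : p - c ≤ m := le_max_left _ _
  have hct : c ≤ (t:ℝ) * lam₁ := by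
    rw [hc]
    nlinarith [hl1]
  linarith
end

section
/- Let H be an m-partite m-uniform hypergraph on vertex sets V_1,...,V_m that contains no copy of K^{(m)}_{2,...,2} (the complete m-partite m-uniform hypergraph with two vertices in each part). Suppose each part carries nonnegative vertex weights summing to 1, with each individual weight at most λ ≤ 1. Then the total edge weight w(H) = Σ_{{v_1,...,v_m}∈E(H)} w(v_1)···w(v_m) satisfies w(H) ≤ C_m · λ^{1/2^{m−1}} for some constant C_m depending only on m. -/
open Finset
open scoped Classical

private lemma lam_pos' {α : Type} [Fintype α] {w : α → ℝ} {lam : ℝ}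
    (h1 : ∑ v, w v = 1) (hl : ∀ v, w v ≤ lam) : 0 < lam := by
  by_contra h
  push_neg at h
  have : (1:ℝ) ≤ 0 := by
    rw [← h1]
    exact Finset.sum_nonpos fun v _ => (hl v).trans h
  linarith

private lemma sum_pi_succ {n : ℕ} (V : Fin (n+1) → Type) [∀ i, Fintype (V i)]
    (f : (∀ i, V i) → ℝ) :
    ∑ e : ∀ i, V i, f e = ∑ a : V 0, ∑ e' : ∀ i : Fin n, V i.succ, f (Fin.cons a e') := by
  rw [← (Fin.consEquiv V).sum_comp f, Fintype.sum_prod_type]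
  rfl

theorem stmt13 (m : ℕ) (hm : 1 ≤ m) :
    ∃ C : ℝ, 0 < C ∧
      ∀ (V : Fin m → Type) [∀ i, Fintype (V i)]
        (H : (∀ i, V i) → Prop) (w : ∀ i, V i → ℝ) (lam : ℝ),
        lam ≤ 1 →
        (∀ i v, 0 ≤ w i v) →
        (∀ i, ∑ v, w i v = 1) →
        (∀ i v, w i v ≤ lam) →
        (¬ ∃ x y : ∀ i, V i, (∀ i, x i ≠ y i) ∧
            ∀ z : ∀ i, V i, (∀ i, z i = x i ∨ z i = y i) → H z) →
        (∑ e : ∀ i, V i, if H e then ∏ i, w i (e i) else 0) ≤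
          C * lam ^ ((1 : ℝ) / 2 ^ (m - 1)) := by
  induction m with
  | zero => omega
  | succ n ih =>
    rcases Nat.eq_zero_or_pos n with rfl | hn
    · -- base case m = 1
      refine ⟨1, one_pos, ?_⟩
      intro V _ H w lam hlam1 hw0 hw1 hwlam hfree
      have hlam : 0 < lam := lam_pos' (hw1 0) (hwlam 0)
      have hext : ∀ (g g' : ∀ i : Fin (0+1), V i), g 0 = g' 0 → g = g' :=
        fun g g' h => funext fun j => Fin.cases h (fun k => k.elim0) j
      have hss : ∀ e f : ∀ i, V i, H e → H f → e = f := by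
        intro e f he hf
        by_contra hne
        refine hfree ⟨e, f,
          fun i => Fin.cases (fun h => hne (hext e f h)) (fun k => k.elim0) i,
          fun z hz => ?_⟩
        rcases hz 0 with h | h
        · rwa [hext z e h]
        · rwa [hext z f h]
      have key : (∑ e : ∀ i, V i, if H e then ∏ i, w i (e i) else 0) ≤ lam := by
        rw [← Finset.sum_filter]
        have hcard : (univ.filter H).card ≤ 1 := by
          rw [Finset.card_le_one]
          intro a ha b hb
          simp only [mem_filter] at ha hb
          exact hss a b ha.2 hb.2
        calc ∑ e ∈ univ.filter H, ∏ i, w i (e i)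
            ≤ (univ.filter H).card • lam := by
              refine Finset.sum_le_card_nsmul _ _ _ fun e _ => ?_
              calc ∏ i, w i (e i) = w 0 (e 0) := by
                    rw [Fin.prod_univ_one]
                  _ ≤ lam := hwlam 0 (e 0)
          _ ≤ 1 • lam := by
              exact nsmul_le_nsmul_left hlam.le hcard
          _ = lam := one_smul _ _
      calc _ ≤ lam := key
        _ = 1 * lam ^ ((1:ℝ) / 2 ^ (1 - 1)) := by
            norm_num
    · obtain ⟨C, hC, hCb⟩ := ih hn
      refine ⟨Real.sqrt (C + 1), Real.sqrt_pos.mpr (by linarith), ?_⟩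
      intro V _ H w lam hlam1 hw0 hw1 hwlam hfree
      have hlam : 0 < lam := lam_pos' (hw1 0) (hwlam 0)
      have hμ0 : (0:ℝ) ≤ lam ^ ((1:ℝ) / 2 ^ (n - 1)) := Real.rpow_nonneg hlam.le _
      have hlamμ : lam ≤ lam ^ ((1:ℝ) / 2 ^ (n - 1)) := by
        have h1 : (1:ℝ) / 2 ^ (n-1) ≤ 1 := by
          rw [div_le_one (by positivity)]
          exact one_le_pow₀ (by norm_num)
        calc lam = lam ^ (1:ℝ) := (Real.rpow_one lam).symm
          _ ≤ _ := Real.rpow_le_rpow_of_exponent_ge hlam hlam1 h1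
      set μ : ℝ := lam ^ ((1:ℝ) / 2 ^ (n - 1)) with hμ
      -- weight of a tail tuple
      have hW0 : ∀ e' : ∀ i : Fin n, V i.succ, 0 ≤ ∏ i, w i.succ (e' i) :=
        fun e' => Finset.prod_nonneg fun i _ => hw0 _ _
      have hWsum : ∑ e' : ∀ i : Fin n, V i.succ, ∏ i, w i.succ (e' i) = 1 := by
        rw [← Fintype.prod_sum]
        simp [hw1]
      have hprod : ∀ (a : V 0) (e' : ∀ i : Fin n, V i.succ),
          (∏ i, w i (Fin.cons a e' i)) = w 0 a * ∏ i, w i.succ (e' i) := by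
        intro a e'
        rw [Fin.prod_univ_succ]
        simp
      set W : (∀ i : Fin n, V i.succ) → ℝ := fun e' => ∏ i, w i.succ (e' i) with hWdef
      set d : (∀ i : Fin n, V i.succ) → ℝ :=
        fun e' => ∑ a : V 0, if H (Fin.cons a e') then w 0 a else 0 with hddef
      set L : V 0 → V 0 → ℝ :=
        fun a b => ∑ e' : ∀ i : Fin n, V i.succ,
          if H (Fin.cons a e') ∧ H (Fin.cons b e') then W e' else 0 with hLdef
      set S : ℝ := ∑ e : ∀ i, V i, if H e then ∏ i, w i (e i) else 0 with hSdef
      have hS0 : 0 ≤ S := by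
        rw [hSdef]
        refine Finset.sum_nonneg fun e _ => ?_
        split_ifs
        · exact Finset.prod_nonneg fun i _ => hw0 _ _
        · exact le_rfl
      have hSW : S = ∑ e', W e' * d e' := by
        rw [hSdef, sum_pi_succ V, Finset.sum_comm]
        refine Finset.sum_congr rfl fun e' _ => ?_
        rw [hddef, Finset.mul_sum]
        refine Finset.sum_congr rfl fun a _ => ?_
        rw [mul_ite, mul_zero, hprod a e', mul_comm]
      -- Cauchy-Schwarz
      have hCS : S ^ 2 ≤ ∑ e', W e' * d e' ^ 2 := by
        have h1 : S = ∑ e', Real.sqrt (W e') * (Real.sqrt (W e') * d e') := by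
          rw [hSW]
          refine Finset.sum_congr rfl fun e' _ => ?_
          rw [← mul_assoc, Real.mul_self_sqrt (hW0 e')]
        calc S ^ 2 = (∑ e', Real.sqrt (W e') * (Real.sqrt (W e') * d e')) ^ 2 := by
              rw [h1]
          _ ≤ (∑ e', Real.sqrt (W e') ^ 2) * ∑ e', (Real.sqrt (W e') * d e') ^ 2 :=
              Finset.sum_mul_sq_le_sq_mul_sq _ _ _
          _ = (∑ e', W e') * ∑ e', W e' * d e' ^ 2 := by
              congr 1
              · exact Finset.sum_congr rfl fun e' _ => Real.sq_sqrt (hW0 e')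
              · refine Finset.sum_congr rfl fun e' _ => ?_
                rw [mul_pow, Real.sq_sqrt (hW0 e')]
          _ = ∑ e', W e' * d e' ^ 2 := by rw [hWsum, one_mul]
      -- expand the square
      have hexp : ∑ e', W e' * d e' ^ 2 = ∑ a, ∑ b, w 0 a * w 0 b * L a b := by
        have h1 : ∀ e', W e' * d e' ^ 2 = ∑ a, ∑ b,
            (if H (Fin.cons a e') ∧ H (Fin.cons b e') then w 0 a * w 0 b * W e' else 0) := by
          intro e'
          rw [sq, hddef, Finset.sum_mul_sum, Finset.mul_sum]
          refine Finset.sum_congr rfl fun a _ => ?_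
          rw [Finset.mul_sum]
          refine Finset.sum_congr rfl fun b _ => ?_
          by_cases h1 : H (Fin.cons a e') <;> by_cases h2 : H (Fin.cons b e') <;>
            simp [h1, h2] <;> ring
        rw [Finset.sum_congr rfl fun e' _ => h1 e', Finset.sum_comm]
        refine Finset.sum_congr rfl fun a _ => ?_
        rw [Finset.sum_comm]
        refine Finset.sum_congr rfl fun b _ => ?_
        rw [hLdef, Finset.mul_sum]
        refine Finset.sum_congr rfl fun e' _ => ?_
        rw [mul_ite, mul_zero]
      -- bounds on links
      have hL0 : ∀ a b, 0 ≤ L a b := by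
        intro a b
        rw [hLdef]
        refine Finset.sum_nonneg fun e' _ => ?_
        split_ifs
        · exact hW0 e'
        · exact le_rfl
      have hLd : ∀ a, L a a ≤ 1 := by
        intro a
        rw [hLdef, ← hWsum]
        refine Finset.sum_le_sum fun e' _ => ?_
        split_ifs
        · exact le_rfl
        · exact hW0 e'
      have hLo : ∀ a b, a ≠ b → L a b ≤ C * μ := by
        intro a b hab
        have hfree' : ¬ ∃ x' y' : ∀ i : Fin n, V i.succ,
            (∀ i, x' i ≠ y' i) ∧ ∀ z' : ∀ i : Fin n, V i.succ,
              (∀ i, z' i = x' i ∨ z' i = y' i) →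
                (H (Fin.cons a z') ∧ H (Fin.cons b z')) := by
          rintro ⟨x', y', hxy, hall⟩
          refine hfree ⟨Fin.cons a x', Fin.cons b y', fun i => ?_, fun z hz => ?_⟩
          · refine Fin.cases ?_ (fun j => ?_) i
            · simpa using hab
            · simpa using hxy j
          · have hz0 : z 0 = a ∨ z 0 = b := by simpa using hz 0
            have htail : ∀ j : Fin n, Fin.tail z j = x' j ∨ Fin.tail z j = y' j := by
              intro j
              simpa [Fin.tail] using hz j.succ
            have hH := hall (Fin.tail z) htail
            have hzc : z = Fin.cons (z 0) (Fin.tail z) := (Fin.cons_self_tail z).symm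
            rcases hz0 with h | h
            · rw [hzc, h]; exact hH.1
            · rw [hzc, h]; exact hH.2
        have h := hCb (fun i => V i.succ)
          (fun e' => H (Fin.cons a e') ∧ H (Fin.cons b e'))
          (fun i => w i.succ) lam hlam1 (fun i v => hw0 _ _) (fun i => hw1 _)
          (fun i v => hwlam _ _) hfree'
        simp only [hLdef, hWdef, hμ]
        refine le_of_eq_of_le (Finset.sum_congr rfl fun e' _ => ?_) h
        congr
      -- the double-sum bound
      have hsum : ∑ a, ∑ b, w 0 a * w 0 b * L a b ≤ lam + C * μ := by
        have hCμ0 : (0:ℝ) ≤ C * μ := mul_nonneg hC.le hμ0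
        have h1 : ∀ a : V 0, ∑ b, w 0 a * w 0 b * L a b ≤ lam * w 0 a + C * μ * w 0 a := by
          intro a
          rw [← Finset.add_sum_erase _ _ (Finset.mem_univ a)]
          have hdiag : w 0 a * w 0 a * L a a ≤ lam * w 0 a := by
            nlinarith [hw0 0 a, hwlam 0 a, hLd a, hL0 a a]
          have hoff : ∑ b ∈ univ.erase a, w 0 a * w 0 b * L a b ≤ C * μ * w 0 a := by
            calc ∑ b ∈ univ.erase a, w 0 a * w 0 b * L a b
                ≤ ∑ b ∈ univ.erase a, w 0 a * w 0 b * (C * μ) := by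
                  refine Finset.sum_le_sum fun b hb => ?_
                  exact mul_le_mul_of_nonneg_left
                    (hLo a b (Finset.ne_of_mem_erase hb).symm)
                    (mul_nonneg (hw0 0 a) (hw0 0 b))
              _ = (C * μ * w 0 a) * ∑ b ∈ univ.erase a, w 0 b := by
                  rw [Finset.mul_sum]; refine Finset.sum_congr rfl fun b _ => by ring
              _ ≤ (C * μ * w 0 a) * 1 := by
                  refine mul_le_mul_of_nonneg_left ?_
                    (mul_nonneg hCμ0 (hw0 0 a))
                  rw [← hw1 0]
                  exact Finset.sum_le_sum_of_subset_of_nonneg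
                    (Finset.subset_univ _) (fun v _ _ => hw0 0 v)
              _ = C * μ * w 0 a := mul_one _
          linarith
        calc ∑ a, ∑ b, w 0 a * w 0 b * L a b
            ≤ ∑ a, (lam * w 0 a + C * μ * w 0 a) := Finset.sum_le_sum fun a _ => h1 a
          _ = lam * (∑ a, w 0 a) + C * μ * (∑ a, w 0 a) := by
              rw [Finset.sum_add_distrib, Finset.mul_sum, Finset.mul_sum]
          _ = lam + C * μ := by rw [hw1 0, mul_one, mul_one]
      have hSsq : S ^ 2 ≤ (C + 1) * μ := by
        calc S ^ 2 ≤ ∑ e', W e' * d e' ^ 2 := hCS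
          _ = ∑ a, ∑ b, w 0 a * w 0 b * L a b := hexp
          _ ≤ lam + C * μ := hsum
          _ ≤ (C + 1) * μ := by linarith
      -- conclude
      have hgoal : Real.sqrt μ = lam ^ ((1:ℝ) / 2 ^ (n + 1 - 1)) := by
        rw [hμ, Real.sqrt_eq_rpow, ← Real.rpow_mul hlam.le]
        congr 1
        rw [div_mul_div_comm, one_mul, ← pow_succ]
        congr 2
        omega
      calc S ≤ Real.sqrt ((C + 1) * μ) := by
            rw [show S = Real.sqrt (S ^ 2) from (Real.sqrt_sq hS0).symm]
            exact Real.sqrt_le_sqrt hSsq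
        _ = Real.sqrt (C + 1) * Real.sqrt μ := Real.sqrt_mul (by linarith) _
        _ = Real.sqrt (C + 1) * lam ^ ((1:ℝ) / 2 ^ (n + 1 - 1)) := by rw [hgoal]
end

section
/- Let S ⊆ R^d and suppose that for some N, for all nonzero b_1,...,b_N ∈ R^d and all x ∈ R^d we have Pr(b_1ξ_1+...+b_Nξ_N ∈ S − x) < 1 (ξ_i i.i.d. Rademacher). Let a_1,...,a_n be nonzero vectors with n ≥ N, let X = a_1ξ_1+...+a_nξ_n, let G be the set of sign vectors ξ ∈ {−1,1}^n with X(ξ) ∈ S, and let G' be the set of sign vectors ξ such that flipping some coordinate ξ_i with i ≤ N changes whether X ∈ S. Then |G| ≤ 2^N · |G'|. -/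
open Finset
open scoped Classical

/-- Discrete intermediate value: a path from a true state to a false state crosses. -/
lemma cross_lemma (P : ℕ → Prop) : ∀ N : ℕ, P 0 → ¬ P N → ∃ k, k < N ∧ P k ∧ ¬ P (k+1)
  | 0, h0, hN => absurd h0 hN
  | (N+1), h0, hN => by
    by_cases hPN : P N
    · exact ⟨N, Nat.lt_succ_self N, hPN, hN⟩
    · obtain ⟨k, hk, hp, hnp⟩ := cross_lemma P N h0 hPN
      exact ⟨k, hk.trans (Nat.lt_succ_self N), hp, hnp⟩

theorem stmt16 {d n N : ℕ} (hNn : N ≤ n) (S : Set (EuclideanSpace ℝ (Fin d)))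
    (hS : ∀ b : Fin N → EuclideanSpace ℝ (Fin d), (∀ i, b i ≠ 0) →
      ∀ x : EuclideanSpace ℝ (Fin d), rprob (fun ε => radSum b ε + x ∈ S) < 1)
    (a : Fin n → EuclideanSpace ℝ (Fin d)) (ha : ∀ i, a i ≠ 0) :
    ((Finset.univ : Finset (Fin n → Bool)).filter fun ε => radSum a ε ∈ S).card ≤
      2 ^ N *
        ((Finset.univ : Finset (Fin n → Bool)).filter fun ε =>
          ∃ i : Fin n, (i : ℕ) < N ∧
            ¬ ((radSum a ε ∈ S) ↔ (radSum a (Function.update ε i (!ε i)) ∈ S))).card := by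
  classical
  set G : Finset (Fin n → Bool) :=
    (Finset.univ : Finset (Fin n → Bool)).filter fun ε => radSum a ε ∈ S with hG
  set G' : Finset (Fin n → Bool) :=
    (Finset.univ : Finset (Fin n → Bool)).filter fun ε =>
      ∃ i : Fin n, (i : ℕ) < N ∧
        ¬ ((radSum a ε ∈ S) ↔ (radSum a (Function.update ε i (!ε i)) ∈ S)) with hG'
  -- Key claim: every ε ∈ G has a "boundary companion" ε' ∈ G' agreeing with ε
  -- outside the first N coordinates.
  have key : ∀ ε ∈ G, ∃ ε' ∈ G', ∀ i : Fin n, N ≤ (i : ℕ) → ε' i = ε i := by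
    intro ε hε
    have hεS : radSum a ε ∈ S := (Finset.mem_filter.mp hε).2
    set b : Fin N → EuclideanSpace ℝ (Fin d) := fun j => a (Fin.castLE hNn j) with hb
    have hb0 : ∀ j, b j ≠ 0 := fun j => ha _
    set x : EuclideanSpace ℝ (Fin d) :=
      ∑ i ∈ (Finset.univ : Finset (Fin n)).filter (fun i : Fin n => ¬ ((i : ℕ) < N)),
        (if ε i then (1 : ℝ) else -1) • a i with hx
    have hprob := hS b hb0 x
    -- extract a sign vector δ with radSum b δ + x ∉ S
    have hδ : ∃ δ : Fin N → Bool, radSum b δ + x ∉ S := by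
      by_contra hcon
      push_neg at hcon
      have hfull : ((Finset.univ : Finset (Fin N → Bool)).filter
          (fun δ => radSum b δ + x ∈ S)) = Finset.univ := by
        apply Finset.filter_true_of_mem
        intro δ _; exact hcon δ
      have : rprob (fun δ : Fin N → Bool => radSum b δ + x ∈ S) = 1 := by
        rw [rprob, hfull]
        simp [Finset.card_univ]
      rw [this] at hprob
      exact lt_irrefl 1 hprob
    obtain ⟨δ, hδS⟩ := hδ
    -- the flipped configuration
    set ε'' : Fin n → Bool := fun i => if h : (i : ℕ) < N then δ ⟨i, h⟩ else ε i with hε''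
    have hε''sum : radSum a ε'' = radSum b δ + x := by
      rw [radSum, radSumOn,
        ← Finset.sum_filter_add_sum_filter_not Finset.univ (fun i : Fin n => ((i : ℕ) < N))]
      congr 1
      · rw [radSum, radSumOn]
        refine Finset.sum_bij'
          (fun (i : Fin n) (hi : i ∈ (Finset.univ : Finset (Fin n)).filter
              (fun i : Fin n => ((i : ℕ) < N))) => (⟨(i : ℕ), (Finset.mem_filter.mp hi).2⟩ : Fin N))
          (fun (j : Fin N) _ => Fin.castLE hNn j)
          (fun _ _ => Finset.mem_univ _) ?_ ?_ ?_ ?_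
        · intro j _
          refine Finset.mem_filter.mpr ⟨Finset.mem_univ _, ?_⟩
          simp [j.isLt]
        · intro i hi; exact Fin.ext rfl
        · intro j _; rfl
        · intro i hi
          have hiN : (i : ℕ) < N := (Finset.mem_filter.mp hi).2
          simp only [hε'', dif_pos hiN, hb]
          congr 1
      · rw [hx]
        apply Finset.sum_congr rfl
        intro i hi
        have hiN : ¬ (i : ℕ) < N := (Finset.mem_filter.mp hi).2
        simp only [hε'', dif_neg hiN]
    have hε''S : radSum a ε'' ∉ S := by rw [hε''sum]; exact hδS
    -- hybrid path
    set H : ℕ → (Fin n → Bool) := fun k i => if (i : ℕ) < k then ε'' i else ε i with hH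
    have hH0 : H 0 = ε := by funext i; simp [hH]
    have hHN : H N = ε'' := by
      funext i
      by_cases h : (i : ℕ) < N
      · simp [hH, h]
      · simp only [hH, if_neg h, hε'', dif_neg h]
    have hP0 : radSum a (H 0) ∈ S := by rw [hH0]; exact hεS
    have hPN : radSum a (H N) ∉ S := by rw [hHN]; exact hε''S
    obtain ⟨k, hkN, hPk, hPk1⟩ := cross_lemma (fun k => radSum a (H k) ∈ S) N hP0 hPN
    have hkn : k < n := Nat.lt_of_lt_of_le hkN hNn
    set i₀ : Fin n := ⟨k, hkn⟩ with hi₀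
    -- ε'' differs from ε at i₀
    have hdiff : ε'' i₀ ≠ ε i₀ := by
      intro heq
      apply hPk1
      have : H (k+1) = H k := by
        funext j
        by_cases hj : (j : ℕ) < k + 1
        · by_cases hj' : (j : ℕ) < k
          · simp [hH, hj, hj']
          · have hjk : (j : ℕ) = k := Nat.le_antisymm (Nat.lt_succ_iff.mp hj) (Nat.le_of_not_lt hj')
            have : j = i₀ := Fin.ext hjk
            subst this
            simp only [hH, if_pos hj, if_neg hj']
            exact heq
        · have hj' : ¬ (j : ℕ) < k := fun h => hj (Nat.lt_succ_of_lt h)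
          simp [hH, hj, hj']
      rw [this]; exact hPk
    have hHki₀ : H k i₀ = ε i₀ := by simp [hH, hi₀]
    have hupd : H (k+1) = Function.update (H k) i₀ (! (H k i₀)) := by
      funext j
      have hflip : ε'' i₀ = ! ε i₀ := Bool.eq_not_iff.mpr hdiff
      by_cases hj : j = i₀
      · rw [hj, Function.update_self, hHki₀]
        have hlt : (i₀ : ℕ) < k + 1 := by simp [i₀]
        simp only [hH, if_pos hlt]
        exact hflip
      · rw [Function.update_of_ne hj]
        by_cases hj' : (j : ℕ) < k
        · simp [hH, hj', Nat.lt_succ_of_lt hj']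
        · have hj'' : ¬ (j : ℕ) < k + 1 := by
            intro h
            exact hj (Fin.ext (Nat.le_antisymm (Nat.lt_succ_iff.mp h) (Nat.le_of_not_lt hj')))
          simp [hH, hj', hj'']
    refine ⟨H k, ?_, ?_⟩
    · rw [hG', Finset.mem_filter]
      refine ⟨Finset.mem_univ _, ⟨i₀, hkN, ?_⟩⟩
      intro hiff
      exact hPk1 (by rw [hupd] at *; exact hiff.mp hPk)
    · intro i hi
      have : ¬ (i : ℕ) < k := Nat.not_lt.mpr (le_trans (Nat.le_of_lt hkN) hi)
      simp [hH, this]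
  -- double counting
  choose! F hF1 hF2 using key
  have h1 : G.card ≤ 2 ^ N * (G.image F).card := by
    apply Finset.card_le_mul_card_image
    intro c _
    have hinj : Set.InjOn (fun (ε : Fin n → Bool) (j : Fin N) => ε (Fin.castLE hNn j))
        ((G.filter fun ε => F ε = c) : Set (Fin n → Bool)) := by
      intro ε₁ h₁ ε₂ h₂ heq
      simp only [Finset.coe_filter, Set.mem_setOf_eq] at h₁ h₂
      funext i
      by_cases hi : (i : ℕ) < N
      · have := congrFun heq ⟨(i : ℕ), hi⟩
        simpa using this
      · have e₁ := hF2 ε₁ h₁.1 i (Nat.le_of_not_lt hi)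
        have e₂ := hF2 ε₂ h₂.1 i (Nat.le_of_not_lt hi)
        rw [← e₁, ← e₂, h₁.2, h₂.2]
    calc (G.filter fun ε => F ε = c).card
        ≤ (Finset.univ : Finset (Fin N → Bool)).card :=
          Finset.card_le_card_of_injOn _ (fun _ _ => Finset.mem_univ _) hinj
      _ = 2 ^ N := by simp
  have h2 : (G.image F).card ≤ G'.card := by
    apply Finset.card_le_card
    intro c hc
    obtain ⟨ε, hε, rfl⟩ := Finset.mem_image.mp hc
    exact hF1 ε hε
  calc G.card ≤ 2 ^ N * (G.image F).card := h1
    _ ≤ 2 ^ N * G'.card := Nat.mul_le_mul_left _ h2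
end
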